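/- Let σ > 0 be small, a ∈ (-1,0), and define h_σ(θ) = σ + θ^{1-a} - θ². Then there is a constant c > 0 depending only on a (not on σ) such that for all θ ∈ (0, c] and all sufficiently small σ > 0, one has h_σ''(θ) + α(α+a) h_σ(θ) + a·cot(θ)·h_σ'(θ) < 0, for any fixed α ∈ (1, 1-a). -/

import Mathlib

open Real

private lemma barrier_deriv1 (a σ : ℝ) {θ : ℝ} (hθ : 0 < θ) :
    deriv (fun θ : ℝ => σ + θ ^ (1 - a) - θ ^ 2) θ = (1 - a) * θ ^ (-a) - 2 * θ := by
  have h1 : HasDerivAt (fun θ : ℝ => σ + θ ^ (1 - a) - θ ^ 2)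
      ((1 - a) * θ ^ (1 - a - 1) - 2 * θ) θ := by
    have h2 : HasDerivAt (fun x : ℝ => x ^ (1 - a)) ((1 - a) * θ ^ (1 - a - 1)) θ :=
      Real.hasDerivAt_rpow_const (Or.inl hθ.ne')
    have h3 : HasDerivAt (fun x : ℝ => x ^ 2) (2 * θ) θ := by
      simpa using hasDerivAt_pow 2 θ
    exact (((hasDerivAt_const θ σ).add h2).sub h3).congr_deriv (by ring)
  rw [h1.deriv]
  norm_num

private lemma barrier_deriv2 (a σ : ℝ) {θ : ℝ} (hθ : 0 < θ) :
    deriv (deriv (fun θ : ℝ => σ + θ ^ (1 - a) - θ ^ 2)) θ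
      = (1 - a) * (-a) * θ ^ (-a - 1) - 2 := by
  have heq : deriv (fun θ : ℝ => σ + θ ^ (1 - a) - θ ^ 2)
      =ᶠ[nhds θ] fun t : ℝ => (1 - a) * t ^ (-a) - 2 * t := by
    filter_upwards [isOpen_Ioi.mem_nhds hθ] with t ht
    exact barrier_deriv1 a σ ht
  rw [heq.deriv_eq]
  have h2 : HasDerivAt (fun t : ℝ => (1 - a) * t ^ (-a) - 2 * t)
      ((1 - a) * ((-a) * θ ^ (-a - 1)) - 2) θ := by
    have h3 : HasDerivAt (fun x : ℝ => x ^ (-a)) ((-a) * θ ^ (-a - 1)) θ :=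
      Real.hasDerivAt_rpow_const (Or.inl hθ.ne')
    exact ((h3.const_mul (1 - a)).sub ((hasDerivAt_id θ).const_mul 2)).congr_deriv (by ring)
  rw [h2.deriv]
  ring

set_option maxHeartbeats 1000000 in
/-- The angular barrier inequality: for `a ∈ (-1,0)` there is `c > 0` (depending only
on `a`) such that for any `α ∈ (1, 1-a)` and all sufficiently small `σ > 0`, the
function `h_σ(θ) = σ + θ^(1-a) - θ²` satisfies
`h_σ'' + α(α+a) h_σ + a cot θ · h_σ' < 0` for all `θ ∈ (0, c]`. -/
theorem angular_barrier_negative (a : ℝ) (ha : a ∈ Set.Ioo (-1:ℝ) 0) :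
    ∃ c > 0, ∀ α ∈ Set.Ioo 1 (1 - a), ∃ σ₀ > 0, ∀ σ ∈ Set.Ioo (0:ℝ) σ₀,
      ∀ θ ∈ Set.Ioc (0:ℝ) c,
        deriv (deriv (fun θ : ℝ => σ + θ ^ (1 - a) - θ ^ 2)) θ
          + α * (α + a) * (σ + θ ^ (1 - a) - θ ^ 2)
          + a * (Real.cos θ / Real.sin θ) *
              deriv (fun θ : ℝ => σ + θ ^ (1 - a) - θ ^ 2) θ < 0 := by
  obtain ⟨ha1, ha2⟩ := ha
  have h1a : (0:ℝ) < 1 - a := by linarith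
  have h1a2 : (0:ℝ) < (1 - a) ^ 2 := by positivity
  have hap : (0:ℝ) < 1 + a := by linarith
  refine ⟨min 1 ((1 + a) / (1 - a) ^ 2), lt_min one_pos (by positivity), ?_⟩
  intro α hα
  obtain ⟨hα1, hα2⟩ := hα
  refine ⟨(1 + a) / (2 * (1 - a)), by positivity, ?_⟩
  intro σ hσ θ hθ
  obtain ⟨hσ0, hσ1⟩ := hσ
  obtain ⟨hθ0, hθc⟩ := hθ
  have hθ1 : θ ≤ 1 := hθc.trans (min_le_left _ _)
  have hθc2 : θ ≤ (1 + a) / (1 - a) ^ 2 := hθc.trans (min_le_right _ _)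
  -- trig setup
  have hθπ : θ < π / 2 := hθ1.trans_lt (by
    have := Real.pi_gt_three
    linarith)
  have hs : 0 < Real.sin θ := Real.sin_pos_of_pos_of_lt_pi hθ0 (by
    have := Real.pi_gt_three; linarith)
  have hcos : 0 ≤ Real.cos θ := Real.cos_nonneg_of_mem_Icc
    ⟨by linarith [hθ0], hθπ.le⟩
  set C := Real.cos θ / Real.sin θ with hC
  -- θ * C ≤ 1, since θ cos θ < sin θ  (from θ < tan θ)
  have htan : θ < Real.tan θ := Real.lt_tan hθ0 hθπ
  have hcos' : 0 < Real.cos θ := Real.cos_pos_of_mem_Ioo ⟨by linarith [hθ0], hθπ⟩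
  have hθcos : θ * Real.cos θ < Real.sin θ := by
    rw [Real.tan_eq_sin_div_cos] at htan
    exact (lt_div_iff₀ hcos').mp htan
  have hC1 : θ * C ≤ 1 := by
    rw [hC, ← mul_div_assoc, div_le_one hs]
    linarith
  have hC0 : 0 ≤ θ * C := by positivity
  -- 1 - θ * C ≤ θ^2, since θ cos θ ≥ sin θ (1 - θ²)
  have hCb : 1 - θ * C ≤ θ ^ 2 := by
    have hcb : 1 - θ ^ 2 / 2 ≤ Real.cos θ := Real.one_sub_sq_div_two_le_cos
    have hsb : Real.sin θ ≤ θ := Real.sin_le hθ0.le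
    have key : Real.sin θ * (1 - θ ^ 2) ≤ θ * Real.cos θ := by
      nlinarith [hs, hθ0, hθ1]
    have h2 : (1 : ℝ) - θ * Real.cos θ / Real.sin θ = (Real.sin θ - θ * Real.cos θ) / Real.sin θ := by
      field_simp
    rw [hC, ← mul_div_assoc, h2, div_le_iff₀ hs]
    nlinarith [key]
  -- rpow algebra: set Q := θ^(-a-1); then θ^(-a) = Q*θ and θ^(1-a) = Q*θ^2
  set Q := θ ^ (-a - 1) with hQdef
  have hQ : 0 < Q := Real.rpow_pos_of_pos hθ0 _
  have hPQ : θ ^ (-a) = Q * θ := by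
    rw [hQdef, ← Real.rpow_add_one hθ0.ne' (-a - 1)]
    norm_num
  have h1aQ : θ ^ (1 - a) = Q * θ ^ 2 := by
    rw [hQdef, show (1:ℝ) - a = -a - 1 + 1 + 1 by ring,
      Real.rpow_add_one hθ0.ne', Real.rpow_add_one hθ0.ne']
    ring
  -- θ^(1-a) ≤ θ since θ^(-a) ≤ 1
  have hPle : θ ^ (-a) ≤ 1 := Real.rpow_le_one hθ0.le hθ1 (by linarith)
  have hQθ2 : Q * θ ^ 2 ≤ θ := by
    have : θ ^ (-a) * θ ≤ 1 * θ := mul_le_mul_of_nonneg_right hPle hθ0.le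
    rw [hPQ] at this
    nlinarith
  -- rewrite derivatives
  rw [barrier_deriv1 a σ hθ0, barrier_deriv2 a σ hθ0, hPQ, h1aQ, ← hQdef]
  -- main estimates
  have hA : (1 - a) * (-a) * Q * (1 - θ * C) ≤ (1 - a) * (-a) * Q * θ ^ 2 :=
    mul_le_mul_of_nonneg_left hCb
      (mul_nonneg (mul_nonneg h1a.le (by linarith)) hQ.le)
  have hB : (-2 * a) * (θ * C) ≤ -2 * a := by
    have := mul_le_mul_of_nonneg_left hC1 (show (0:ℝ) ≤ -2 * a by linarith)
    linarith
  have hT3 : α * (α + a) * (σ + Q * θ ^ 2 - θ ^ 2) ≤ (1 - a) * (σ + Q * θ ^ 2) := by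
    have hαa : 0 < α + a := by linarith
    have hco : α * (α + a) ≤ 1 - a := by
      have := mul_le_mul hα2.le (show α + a ≤ 1 by linarith) hαa.le h1a.le
      linarith [this]
    have hco0 : 0 < α * (α + a) := mul_pos (by linarith) hαa
    have hpos : 0 ≤ σ + Q * θ ^ 2 := by positivity
    rcases le_or_gt (σ + Q * θ ^ 2 - θ ^ 2) 0 with h | h
    · have h1 : α * (α + a) * (σ + Q * θ ^ 2 - θ ^ 2) ≤ 0 :=
        mul_nonpos_iff.mpr (Or.inl ⟨hco0.le, h⟩)
      nlinarith [mul_nonneg h1a.le hpos]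
    · have h1 : α * (α + a) * (σ + Q * θ ^ 2 - θ ^ 2) ≤ (1 - a) * (σ + Q * θ ^ 2 - θ ^ 2) :=
        mul_le_mul_of_nonneg_right hco h.le
      have h2 : (1 - a) * (σ + Q * θ ^ 2 - θ ^ 2) ≤ (1 - a) * (σ + Q * θ ^ 2) := by
        have hsq : (0:ℝ) ≤ θ ^ 2 := sq_nonneg θ
        nlinarith
      linarith
  have hD : (1 - a) ^ 2 * (Q * θ ^ 2) ≤ (1 - a) ^ 2 * θ :=
    mul_le_mul_of_nonneg_left hQθ2 (by positivity)
  have hE : (1 - a) ^ 2 * θ ≤ 1 + a := by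
    rw [le_div_iff₀ h1a2] at hθc2
    linarith [hθc2]
  have hσb : (1 - a) * σ ≤ (1 + a) / 2 := by
    rw [lt_div_iff₀ (by positivity : (0:ℝ) < 2 * (1 - a))] at hσ1
    rw [le_div_iff₀ (by norm_num : (0:ℝ) < 2)]
    nlinarith [hσ1.le]
  nlinarith [hA, hB, hT3, hD, hE, hσb, hap]
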